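/- For every nonnegative integer n, the set of pairs (λ, μ) of partitions with o(λ) + o(μ) = n is finite and its cardinality equals p₄(n), the number of quadruples of partitions whose sizes sum to n. -/

import Mathlib

/-- A partition: a weakly decreasing sequence of nonnegative integers with
finitely many nonzero terms. -/
structure CPartition where
  parts : ℕ → ℕ
  antitone : Antitone parts
  finite_support : Set.Finite {i : ℕ | parts i ≠ 0}

/-- The conjugate partition: `λ'_j = #{i : λ_i ≥ j}` (columns indexed from 1). -/
noncomputable def CPartition.conj (lam : CPartition) (j : ℕ) : ℕ :=
  Nat.card {i : ℕ | j ≤ lam.parts i}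

/-- `o(λ) = Σ_{j odd} λ'_j`, the number of boxes of `λ` in odd-indexed columns. -/
noncomputable def CPartition.oddCols (lam : CPartition) : ℕ :=
  ∑' j : ℕ, if Odd j then lam.conj j else 0

/-- `|λ| = Σᵢ λᵢ`, the size of a partition. -/
noncomputable def CPartition.size (lam : CPartition) : ℕ :=
  ∑' i : ℕ, lam.parts i

/-! ### Auxiliary development -/

theorem CPartition.ext' {a b : CPartition} (h : a.parts = b.parts) : a = b := by
  cases a; cases b; simpa using h

theorem CPartition.exists_bound (lam : CPartition) :
    ∃ N, ∀ i, N ≤ i → lam.parts i = 0 := by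
  refine ⟨lam.finite_support.toFinset.sup id + 1, fun i hi => ?_⟩
  by_contra h
  have hm : i ∈ lam.finite_support.toFinset := by
    simp only [Set.Finite.mem_toFinset, Set.mem_setOf_eq]; exact h
  have := Finset.le_sup (f := id) hm
  simp only [id] at this
  omega

/-- Telescoping sum for an antitone sequence. -/
theorem telescope (p : ℕ → ℕ) (hp : Antitone p) (i : ℕ) :
    ∀ M, i ≤ M → ∑ k ∈ Finset.Ico i M, (p k - p (k + 1)) = p i - p M := by
  intro M
  induction M with
  | zero => intro h; interval_cases i; simp
  | succ M ih =>
    intro h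
    rcases Nat.lt_or_ge i (M + 1) with h' | h'
    · have hiM : i ≤ M := by omega
      rw [Finset.sum_Ico_succ_top hiM, ih hiM]
      have h1 : p (M + 1) ≤ p M := hp (by omega)
      have h2 : p M ≤ p i := hp hiM
      omega
    · have : i = M + 1 := by omega
      subst this; simp

/-- From a finitely supported "difference sequence" build the partition
`parts i = ∑_{k ≥ i} f k`. -/
noncomputable def ofDiff (f : ℕ →₀ ℕ) : CPartition where
  parts i := ∑ k ∈ f.support.filter (fun k => i ≤ k), f k
  antitone := by
    intro i j hij
    apply Finset.sum_le_sum_of_subset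
    intro k hk
    simp only [Finset.mem_filter] at *
    exact ⟨hk.1, hij.trans hk.2⟩
  finite_support := by
    apply Set.Finite.subset (Set.finite_Iic (f.support.sup id))
    intro i hi
    simp only [Set.mem_setOf_eq] at hi
    obtain ⟨k, hk, -⟩ := Finset.exists_ne_zero_of_sum_ne_zero hi
    simp only [Finset.mem_filter] at hk
    have := Finset.le_sup (f := id) hk.1
    simp only [id] at this
    exact le_trans hk.2 this

theorem ofDiff_parts (f : ℕ →₀ ℕ) (i : ℕ) :
    (ofDiff f).parts i = ∑ k ∈ f.support.filter (fun k => i ≤ k), f k := rfl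

/-- The difference sequence of a partition. -/
noncomputable def toDiff (lam : CPartition) : ℕ →₀ ℕ :=
  Finsupp.ofSupportFinite (fun k => lam.parts k - lam.parts (k + 1)) <| by
    apply Set.Finite.subset lam.finite_support
    intro k hk
    simp only [Function.mem_support, Set.mem_setOf_eq] at *
    omega

theorem toDiff_apply (lam : CPartition) (k : ℕ) :
    toDiff lam k = lam.parts k - lam.parts (k + 1) := rfl

theorem ofDiff_toDiff (lam : CPartition) : ofDiff (toDiff lam) = lam := by
  apply CPartition.ext'
  funext i
  obtain ⟨N, hN⟩ := lam.exists_bound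
  have hle : i ≤ max N i := le_max_right _ _
  rw [ofDiff_parts]
  have hsub : (toDiff lam).support.filter (fun k => i ≤ k) ⊆ Finset.Ico i (max N i) := by
    intro k hk
    simp only [Finset.mem_filter, Finsupp.mem_support_iff, toDiff_apply] at hk
    simp only [Finset.mem_Ico]
    refine ⟨hk.2, ?_⟩
    by_contra h
    have h1 := hN k (by omega)
    omega
  rw [Finset.sum_subset hsub]
  · rw [show (∑ k ∈ Finset.Ico i (max N i), toDiff lam k)
        = ∑ k ∈ Finset.Ico i (max N i), (lam.parts k - lam.parts (k+1)) from rfl,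
      telescope lam.parts lam.antitone i (max N i) hle, hN (max N i) (le_max_left _ _)]
    omega
  · intro x hIco hx
    by_contra hne
    apply hx
    simp only [Finset.mem_filter, Finsupp.mem_support_iff]
    simp only [Finset.mem_Ico] at hIco
    exact ⟨hne, hIco.1⟩

theorem toDiff_ofDiff (f : ℕ →₀ ℕ) : toDiff (ofDiff f) = f := by
  ext k
  rw [toDiff_apply, ofDiff_parts, ofDiff_parts]
  have hsplit : ∑ j ∈ f.support.filter (fun j => k ≤ j), f j
      = f k + ∑ j ∈ f.support.filter (fun j => k + 1 ≤ j), f j := by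
    have h1 : f.support.filter (fun j => k ≤ j)
        = (f.support.filter (fun j => j = k)) ∪ (f.support.filter (fun j => k + 1 ≤ j)) := by
      rw [← Finset.filter_or]
      apply Finset.filter_congr
      intro j _
      constructor
      · intro h; omega
      · intro h; omega
    rw [h1, Finset.sum_union]
    · congr 1
      by_cases hk : k ∈ f.support
      · rw [Finset.filter_eq', if_pos hk, Finset.sum_singleton]
      · rw [Finset.filter_eq', if_neg hk, Finset.sum_empty,
          Finsupp.notMem_support_iff.mp hk]
    · rw [Finset.disjoint_left]
      intro j hj hj'
      simp only [Finset.mem_filter] at *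
      omega
  omega

/-- The equivalence between partitions and their difference sequences. -/
noncomputable def diffEquiv : CPartition ≃ (ℕ →₀ ℕ) where
  toFun := toDiff
  invFun := ofDiff
  left_inv := ofDiff_toDiff
  right_inv := toDiff_ofDiff

/-- Weighted sums against a finsupp. -/
noncomputable def wsum (c : ℕ → ℕ) (f : ℕ →₀ ℕ) : ℕ :=
  ∑ k ∈ f.support, c k * f k

theorem wsum_eq_sum (c : ℕ → ℕ) (f : ℕ →₀ ℕ) (s : Finset ℕ) (h : f.support ⊆ s) :
    wsum c f = ∑ k ∈ s, c k * f k := by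
  apply Finset.sum_subset h
  intro x _ hx
  rw [Finsupp.notMem_support_iff.mp hx, mul_zero]

/-- `W f = ∑ (k+1) f k` : the size of the partition with difference sequence `f`. -/
noncomputable def W (f : ℕ →₀ ℕ) : ℕ := wsum (fun k => k + 1) f

theorem support_bound (f : ℕ →₀ ℕ) {k : ℕ} (hk : k ∈ f.support) : k ≤ f.support.sup id :=
  Finset.le_sup (f := id) hk

theorem ofDiff_parts_eq_zero (f : ℕ →₀ ℕ) {i : ℕ} (hi : f.support.sup id < i) :
    (ofDiff f).parts i = 0 := by
  rw [ofDiff_parts]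
  apply Finset.sum_eq_zero
  intro k hk
  simp only [Finset.mem_filter] at hk
  have := support_bound f hk.1
  omega

theorem size_ofDiff (f : ℕ →₀ ℕ) : (ofDiff f).size = W f := by
  set B := f.support.sup id with hB
  rw [CPartition.size, tsum_eq_sum (s := Finset.range (B + 1))
    (fun i hi => ofDiff_parts_eq_zero f (by simp only [Finset.mem_range] at hi; omega))]
  rw [W, wsum]
  have : ∀ i, (ofDiff f).parts i = ∑ k ∈ f.support, if i ≤ k then f k else 0 := by
    intro i; rw [ofDiff_parts, Finset.sum_filter]
  simp_rw [this]
  rw [Finset.sum_comm]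
  apply Finset.sum_congr rfl
  intro k hk
  have hkB : k ≤ B := support_bound f hk
  have hfil : (Finset.range (B + 1)).filter (fun i => i ≤ k) = Finset.range (k + 1) := by
    ext i; simp only [Finset.mem_filter, Finset.mem_range]; omega
  rw [← Finset.sum_filter, hfil, Finset.sum_const, Finset.card_range, smul_eq_mul]

/-- `O f = ∑ (k/2+1) f k` : the sum of even-indexed parts of the partition with
difference sequence `f`. -/
noncomputable def O (f : ℕ →₀ ℕ) : ℕ := wsum (fun k => k / 2 + 1) f

theorem evenIdx_ofDiff (f : ℕ →₀ ℕ) : (∑' t : ℕ, (ofDiff f).parts (2 * t)) = O f := by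
  set B := f.support.sup id with hB
  rw [tsum_eq_sum (s := Finset.range (B + 1))
    (fun i hi => ofDiff_parts_eq_zero f (by simp only [Finset.mem_range] at hi; omega))]
  rw [O, wsum]
  have : ∀ i, (ofDiff f).parts i = ∑ k ∈ f.support, if i ≤ k then f k else 0 := by
    intro i; rw [ofDiff_parts, Finset.sum_filter]
  simp_rw [this]
  rw [Finset.sum_comm]
  apply Finset.sum_congr rfl
  intro k hk
  have hkB : k ≤ B := support_bound f hk
  have hfil : (Finset.range (B + 1)).filter (fun t => 2 * t ≤ k) = Finset.range (k / 2 + 1) := by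
    ext t; simp only [Finset.mem_filter, Finset.mem_range]; omega
  rw [← Finset.sum_filter, hfil, Finset.sum_const, Finset.card_range, smul_eq_mul]

/-! ### Conjugation -/

theorem conj_set_finite (lam : CPartition) (j : ℕ) :
    {i : ℕ | j + 1 ≤ lam.parts i}.Finite := by
  apply Set.Finite.subset lam.finite_support
  intro i hi
  simp only [Set.mem_setOf_eq] at *
  omega

/-- Key lemma: membership in the column set is equivalent to being below its cardinality. -/
theorem mem_iff_lt_card (lam : CPartition) (j i : ℕ) :
    j + 1 ≤ lam.parts i ↔ i < Nat.card {i' : ℕ | j + 1 ≤ lam.parts i'} := by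
  set S := {i' : ℕ | j + 1 ≤ lam.parts i'} with hS
  have hfin : S.Finite := conj_set_finite lam j
  rw [Nat.card_coe_set_eq]
  constructor
  · intro h
    have hsub : Set.Iic i ⊆ S := by
      intro i' hi'
      simp only [Set.mem_Iic] at hi'
      exact le_trans h (lam.antitone hi')
    have h1 : (Set.Iic i).ncard ≤ S.ncard := Set.ncard_le_ncard hsub hfin
    have h2 : (Set.Iic i).ncard = i + 1 := by
      rw [show Set.Iic i = ↑(Finset.range (i + 1)) from by
        ext x; simp only [Finset.coe_range, Set.mem_Iio, Set.mem_Iic]; omega,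
        Set.ncard_coe_finset, Finset.card_range]
    omega
  · intro h
    by_contra hc
    have hsub : S ⊆ Set.Iio i := by
      intro i' hi'
      simp only [Set.mem_Iio]
      by_contra h'
      exact hc (le_trans hi' (lam.antitone (by omega)))
    have h1 : S.ncard ≤ (Set.Iio i).ncard := Set.ncard_le_ncard hsub (Set.finite_Iio i)
    have h2 : (Set.Iio i).ncard = i := by
      rw [← Finset.coe_range, Set.ncard_coe_finset, Finset.card_range]
    omega

/-- The conjugate as a `CPartition` (parts indexed from 0). -/
noncomputable def conjP (lam : CPartition) : CPartition where
  parts j := lam.conj (j + 1)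
  antitone := by
    intro j j' hj
    show Nat.card {i : ℕ | j' + 1 ≤ lam.parts i} ≤ Nat.card {i : ℕ | j + 1 ≤ lam.parts i}
    rw [Nat.card_coe_set_eq, Nat.card_coe_set_eq]
    apply Set.ncard_le_ncard
    · intro i hi
      simp only [Set.mem_setOf_eq] at *
      omega
    · exact conj_set_finite lam j
  finite_support := by
    apply Set.Finite.subset (Set.finite_Iic (lam.parts 0))
    intro j hj
    simp only [Set.mem_setOf_eq, Set.mem_Iic] at *
    by_contra h
    apply hj
    show Nat.card {i : ℕ | j + 1 ≤ lam.parts i} = 0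
    have : {i : ℕ | j + 1 ≤ lam.parts i} = ∅ := by
      ext i
      simp only [Set.mem_setOf_eq, Set.mem_empty_iff_false, iff_false, not_le]
      have := lam.antitone (Nat.zero_le i)
      omega
    rw [this]; simp

theorem conjP_parts (lam : CPartition) (j : ℕ) :
    (conjP lam).parts j = Nat.card {i : ℕ | j + 1 ≤ lam.parts i} := rfl

theorem conjP_conjP (lam : CPartition) : conjP (conjP lam) = lam := by
  apply CPartition.ext'
  funext i
  rw [conjP_parts]
  have hset : {j : ℕ | i + 1 ≤ (conjP lam).parts j} = Set.Iio (lam.parts i) := by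
    ext j
    rw [Set.mem_setOf_eq, conjP_parts, Set.mem_Iio]
    constructor
    · intro h
      have := (mem_iff_lt_card lam j i).mpr (by omega)
      omega
    · intro h
      have := (mem_iff_lt_card lam j i).mp (by omega)
      omega
  rw [hset, Nat.card_coe_set_eq, ← Finset.coe_range, Set.ncard_coe_finset,
    Finset.card_range]

noncomputable def conjEquiv : CPartition ≃ CPartition where
  toFun := conjP
  invFun := conjP
  left_inv := conjP_conjP
  right_inv := conjP_conjP

theorem sum_range_two_mul (F : ℕ → ℕ) (N : ℕ) :
    ∑ k ∈ Finset.range (2 * N), F k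
      = ∑ t ∈ Finset.range N, F (2 * t) + ∑ t ∈ Finset.range N, F (2 * t + 1) := by
  induction N with
  | zero => simp
  | succ N ih =>
    have h2 : 2 * (N + 1) = (2 * N + 1) + 1 := by ring
    rw [h2, Finset.sum_range_succ, Finset.sum_range_succ, Finset.sum_range_succ,
      Finset.sum_range_succ, ih]
    omega

theorem oddCols_eq_evenIdx (lam : CPartition) :
    lam.oddCols = ∑' t : ℕ, (conjP lam).parts (2 * t) := by
  obtain ⟨N, hN⟩ := (conjP lam).exists_bound
  have hz : ∀ j, N + 1 ≤ j → lam.conj j = 0 := by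
    intro j hj
    have := hN (j - 1) (by omega)
    rw [conjP_parts] at this
    have hj1 : j - 1 + 1 = j := by omega
    rw [hj1] at this
    show Nat.card {i : ℕ | j ≤ lam.parts i} = 0
    omega
  rw [CPartition.oddCols, tsum_eq_sum (s := Finset.range (2 * (N + 1)))
    (f := fun j => if Odd j then lam.conj j else 0) ?h1,
    tsum_eq_sum (s := Finset.range (N + 1))
    (f := fun t => (conjP lam).parts (2 * t)) ?h2]
  case h1 =>
    intro j hj
    simp only [Finset.mem_range] at hj
    show (if Odd j then lam.conj j else 0) = 0
    rw [hz j (by omega)]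
    simp
  case h2 =>
    intro t ht
    simp only [Finset.mem_range] at ht
    show (conjP lam).parts (2 * t) = 0
    exact hN _ (by omega)
  rw [sum_range_two_mul]
  have he : ∀ t ∈ Finset.range (N + 1),
      (if Odd (2 * t) then lam.conj (2 * t) else 0) = 0 := by
    intro t _
    simp [Nat.even_iff, parity_simps]
  have ho : ∀ t ∈ Finset.range (N + 1),
      (if Odd (2 * t + 1) then lam.conj (2 * t + 1) else 0) = (conjP lam).parts (2 * t) := by
    intro t _
    rw [if_pos (by simp [parity_simps])]
    rfl
  rw [Finset.sum_congr rfl he, Finset.sum_congr rfl ho]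
  simp

/-! ### The even/odd splitting of a finsupp -/

noncomputable def spE (f : ℕ →₀ ℕ) : ℕ →₀ ℕ :=
  Finsupp.ofSupportFinite (fun b => f (2 * b)) <| by
    have h : Function.support (fun b => f (2 * b)) ⊆ (fun b => 2 * b) ⁻¹' (f.support : Set ℕ) := by
      intro b hb
      simp only [Function.mem_support] at hb
      simp [Finsupp.mem_support_iff, hb]
    exact Set.Finite.subset (Set.Finite.preimage (fun x _ y _ h => by omega)
      (f.support.finite_toSet)) h

noncomputable def spO (f : ℕ →₀ ℕ) : ℕ →₀ ℕ :=
  Finsupp.ofSupportFinite (fun a => f (2 * a + 1)) <| by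
    have h : Function.support (fun a => f (2 * a + 1))
        ⊆ (fun a => 2 * a + 1) ⁻¹' (f.support : Set ℕ) := by
      intro a ha
      simp only [Function.mem_support] at ha
      simp [Finsupp.mem_support_iff, ha]
    exact Set.Finite.subset (Set.Finite.preimage (fun x _ y _ h => by omega)
      (f.support.finite_toSet)) h

noncomputable def spInv (p : (ℕ →₀ ℕ) × (ℕ →₀ ℕ)) : ℕ →₀ ℕ :=
  Finsupp.ofSupportFinite (fun k => if k % 2 = 0 then p.1 (k / 2) else p.2 (k / 2)) <| by
    apply Set.Finite.subset (Set.Finite.union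
      (Set.Finite.image (fun b => 2 * b) p.1.support.finite_toSet)
      (Set.Finite.image (fun a => 2 * a + 1) p.2.support.finite_toSet))
    intro k hk
    simp only [Function.mem_support] at hk
    by_cases h : k % 2 = 0
    · left
      refine ⟨k / 2, ?_, show 2 * (k / 2) = k by omega⟩
      rw [if_pos h] at hk
      simpa [Finsupp.mem_support_iff] using hk
    · right
      refine ⟨k / 2, ?_, show 2 * (k / 2) + 1 = k by omega⟩
      rw [if_neg h] at hk
      simpa [Finsupp.mem_support_iff] using hk

theorem spE_apply (f : ℕ →₀ ℕ) (b : ℕ) : spE f b = f (2 * b) := rfl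
theorem spO_apply (f : ℕ →₀ ℕ) (a : ℕ) : spO f a = f (2 * a + 1) := rfl
theorem spInv_apply (p : (ℕ →₀ ℕ) × (ℕ →₀ ℕ)) (k : ℕ) :
    spInv p k = if k % 2 = 0 then p.1 (k / 2) else p.2 (k / 2) := rfl

noncomputable def sp : (ℕ →₀ ℕ) ≃ (ℕ →₀ ℕ) × (ℕ →₀ ℕ) where
  toFun f := (spE f, spO f)
  invFun := spInv
  left_inv := by
    intro f
    ext k
    rw [spInv_apply]
    by_cases h : k % 2 = 0
    · rw [if_pos h, spE_apply]
      congr 1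
      omega
    · rw [if_neg h, spO_apply]
      congr 1
      omega
  right_inv := by
    intro p
    ext k
    · rw [spE_apply, spInv_apply, if_pos (by omega)]
      congr 1
      omega
    · rw [spO_apply, spInv_apply, if_neg (by omega)]
      congr 1
      omega

theorem O_eq_W_add_W (f : ℕ →₀ ℕ) : O f = W (spE f) + W (spO f) := by
  set B := f.support.sup id with hB
  have hsO : f.support ⊆ Finset.range (2 * (B + 1)) := by
    intro k hk
    have := support_bound f hk
    simp only [Finset.mem_range]
    omega
  have hsE : (spE f).support ⊆ Finset.range (B + 1) := by
    intro b hb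
    simp only [Finsupp.mem_support_iff, spE_apply] at hb
    have := support_bound f (Finsupp.mem_support_iff.mpr hb)
    simp only [Finset.mem_range]
    omega
  have hsOd : (spO f).support ⊆ Finset.range (B + 1) := by
    intro a ha
    simp only [Finsupp.mem_support_iff, spO_apply] at ha
    have := support_bound f (Finsupp.mem_support_iff.mpr ha)
    simp only [Finset.mem_range]
    omega
  rw [O, wsum_eq_sum _ _ _ hsO, W, W, wsum_eq_sum _ _ _ hsE, wsum_eq_sum _ _ _ hsOd,
    sum_range_two_mul (fun k => (k / 2 + 1) * f k)]
  congr 1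
  · apply Finset.sum_congr rfl
    intro b _
    rw [spE_apply]
    congr 1
    omega
  · apply Finset.sum_congr rfl
    intro a _
    rw [spO_apply]
    congr 1
    omega

/-! ### Finiteness -/

theorem term_le_W (f : ℕ →₀ ℕ) (k : ℕ) : (k + 1) * f k ≤ W f := by
  by_cases h : f k = 0
  · simp [h]
  · exact Finset.single_le_sum (f := fun k => (k + 1) * f k) (fun _ _ => Nat.zero_le _)
      (Finsupp.mem_support_iff.mpr h)

theorem W_le_finite (n : ℕ) : {f : ℕ →₀ ℕ | W f ≤ n}.Finite := by
  apply Set.Finite.of_finite_image (f := fun f => fun k : Fin (n + 1) => (f k : ℕ))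
  · apply Set.Finite.subset (Set.Finite.pi (fun _ : Fin (n+1) => Set.finite_Iic n))
    rintro g ⟨f, hf, rfl⟩
    intro k _
    simp only [Set.mem_Iic]
    have := term_le_W f k
    simp only [Set.mem_setOf_eq] at hf
    nlinarith [Nat.zero_le (f k)]
  · intro f hf f' hf' h
    simp only [Set.mem_setOf_eq] at hf hf'
    ext k
    by_cases hk : k ≤ n
    · exact congrFun h ⟨k, by omega⟩
    · have h1 : f k = 0 := by
        by_contra hc
        have := term_le_W f k
        have : f k ≥ 1 := by omega
        nlinarith
      have h2 : f' k = 0 := by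
        by_contra hc
        have := term_le_W f' k
        have : f' k ≥ 1 := by omega
        nlinarith
      rw [h1, h2]

/-! ### Putting it together -/

theorem size_eq_W (lam : CPartition) : lam.size = W (diffEquiv lam) := by
  have := size_ofDiff (toDiff lam)
  rwa [ofDiff_toDiff] at this

theorem size_symm_eq (f : ℕ →₀ ℕ) : (diffEquiv.symm f).size = W f := by
  rw [size_eq_W, Equiv.apply_symm_apply]

theorem oddCols_eq (lam : CPartition) : lam.oddCols = O (diffEquiv (conjP lam)) := by
  rw [oddCols_eq_evenIdx]
  have := evenIdx_ofDiff (toDiff (conjP lam))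
  rwa [ofDiff_toDiff] at this

/-- The bijection sending a partition to a pair of partitions with
`oddCols λ = |γ| + |δ|`. -/
noncomputable def D : CPartition ≃ CPartition × CPartition :=
  conjEquiv.trans (diffEquiv.trans (sp.trans (diffEquiv.symm.prodCongr diffEquiv.symm)))

theorem oddCols_eq_D (lam : CPartition) :
    lam.oddCols = (D lam).1.size + (D lam).2.size := by
  rw [oddCols_eq]
  have h1 : (D lam).1 = diffEquiv.symm (spE (diffEquiv (conjP lam))) := rfl
  have h2 : (D lam).2 = diffEquiv.symm (spO (diffEquiv (conjP lam))) := rfl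
  rw [h1, h2, size_symm_eq, size_symm_eq, O_eq_W_add_W]

/-- The full bijection from pairs to quadruples. -/
noncomputable def BEquiv : (CPartition × CPartition) ≃
    (CPartition × CPartition × CPartition × CPartition) :=
  (D.prodCongr D).trans (Equiv.prodAssoc _ _ _)

theorem BEquiv_prop (p : CPartition × CPartition) (n : ℕ) :
    (p.1.oddCols + p.2.oddCols = n) ↔
      ((BEquiv p).1.size + (BEquiv p).2.1.size + (BEquiv p).2.2.1.size
        + (BEquiv p).2.2.2.size = n) := by
  have h1 : (BEquiv p).1 = (D p.1).1 := rfl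
  have h2 : (BEquiv p).2.1 = (D p.1).2 := rfl
  have h3 : (BEquiv p).2.2.1 = (D p.2).1 := rfl
  have h4 : (BEquiv p).2.2.2 = (D p.2).2 := rfl
  rw [h1, h2, h3, h4, oddCols_eq_D p.1, oddCols_eq_D p.2]
  omega

theorem quad_finite (n : ℕ) :
    {t : CPartition × CPartition × CPartition × CPartition |
        t.1.size + t.2.1.size + t.2.2.1.size + t.2.2.2.size = n}.Finite := by
  set E : (CPartition × CPartition × CPartition × CPartition) ≃
      ((ℕ →₀ ℕ) × (ℕ →₀ ℕ) × (ℕ →₀ ℕ) × (ℕ →₀ ℕ)) :=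
    diffEquiv.prodCongr (diffEquiv.prodCongr (diffEquiv.prodCongr diffEquiv)) with hE
  set K := {f : ℕ →₀ ℕ | W f ≤ n} with hK
  have hKfin : (K ×ˢ K ×ˢ K ×ˢ K).Finite :=
    (W_le_finite n).prod ((W_le_finite n).prod ((W_le_finite n).prod (W_le_finite n)))
  apply Set.Finite.subset (Set.Finite.preimage (E.injective.injOn) hKfin)
  intro t ht
  obtain ⟨a, b, c, d⟩ := t
  simp only [Set.mem_setOf_eq] at ht
  simp only [Set.mem_preimage, Set.mem_prod, hE, Equiv.prodCongr_apply, Prod.map, hK,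
    Set.mem_setOf_eq]
  refine ⟨?_, ?_, ?_, ?_⟩ <;> rw [← size_eq_W] <;> omega

theorem count_partition_pairs_by_oddCols (n : ℕ) :
    {p : CPartition × CPartition | p.1.oddCols + p.2.oddCols = n}.Finite ∧
    {t : CPartition × CPartition × CPartition × CPartition |
        t.1.size + t.2.1.size + t.2.2.1.size + t.2.2.2.size = n}.Finite ∧
    Nat.card {p : CPartition × CPartition // p.1.oddCols + p.2.oddCols = n}
      = Nat.card {t : CPartition × CPartition × CPartition × CPartition //
          t.1.size + t.2.1.size + t.2.2.1.size + t.2.2.2.size = n} := by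
  have hquad := quad_finite n
  have hpairs : {p : CPartition × CPartition | p.1.oddCols + p.2.oddCols = n}.Finite := by
    have heq : {p : CPartition × CPartition | p.1.oddCols + p.2.oddCols = n}
        = BEquiv ⁻¹' {t : CPartition × CPartition × CPartition × CPartition |
            t.1.size + t.2.1.size + t.2.2.1.size + t.2.2.2.size = n} := by
      ext p
      simp only [Set.mem_setOf_eq, Set.mem_preimage]
      exact BEquiv_prop p n
    rw [heq]
    exact Set.Finite.preimage (BEquiv.injective.injOn) hquad
  refine ⟨hpairs, hquad, ?_⟩
  exact Nat.card_congr (Equiv.subtypeEquiv BEquiv (fun p => BEquiv_prop p n))
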